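/- Fix T > 0, σ ∈ ℝ, R ∈ (0,1] and ρ > 0 with ρ ≠ σ². Then for every s ∈ [0,T] the quantity (1 - R + R(ρ-σ²)) e^{(ρ-σ²) T} - (1-R) e^{(ρ-σ²) s} is nonzero, and the function P(s) = R(ρ-σ²) e^{(ρ-σ²) s} / ((1 - R + R(ρ-σ²)) e^{(ρ-σ²) T} - (1-R) e^{(ρ-σ²) s}) is differentiable on [0,T] and is a solution of the Riccati equation P'(s) + σ² P(s) - ρ P(s) - ((1-R)/R) P(s)² = 0 for s ∈ [0,T] with terminal condition P(T) = 1. -/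

import Mathlib

open Real Set

/-- With `T > 0`, `σ ∈ ℝ`, `R ∈ (0,1]`, `ρ > 0`, `ρ ≠ σ²`, for every
`s ∈ [0,T]` the denominator `(1 - R + R(ρ-σ²)) e^{(ρ-σ²)T} - (1-R) e^{(ρ-σ²)s}` is
nonzero, and `P(s) = R(ρ-σ²) e^{(ρ-σ²)s} / ((1 - R + R(ρ-σ²)) e^{(ρ-σ²)T} - (1-R) e^{(ρ-σ²)s})`
is differentiable on `[0,T]` and solves
`P'(s) + σ² P(s) - ρ P(s) - ((1-R)/R) P(s)² = 0` with `P(T) = 1`. -/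
theorem zero_sum_game_riccati_solution
    (T σ R ρ : ℝ) (hT : 0 < T) (hR0 : 0 < R) (hR1 : R ≤ 1) (hρ : 0 < ρ)
    (hne : ρ ≠ σ ^ 2)
    (P : ℝ → ℝ)
    (hP : P = fun s : ℝ =>
      R * (ρ - σ ^ 2) * Real.exp ((ρ - σ ^ 2) * s) /
        ((1 - R + R * (ρ - σ ^ 2)) * Real.exp ((ρ - σ ^ 2) * T)
          - (1 - R) * Real.exp ((ρ - σ ^ 2) * s))) :
    (∀ s ∈ Set.Icc (0 : ℝ) T,
      (1 - R + R * (ρ - σ ^ 2)) * Real.exp ((ρ - σ ^ 2) * T)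
        - (1 - R) * Real.exp ((ρ - σ ^ 2) * s) ≠ 0) ∧
    (∃ P' : ℝ → ℝ, ∀ s ∈ Set.Icc (0 : ℝ) T,
      HasDerivAt P (P' s) s ∧
      P' s + σ ^ 2 * P s - ρ * P s - ((1 - R) / R) * (P s) ^ 2 = 0) ∧
    P T = 1 := by
  set a := ρ - σ ^ 2 with ha
  have ha0 : a ≠ 0 := sub_ne_zero.mpr hne
  have hR1' : 0 ≤ 1 - R := by linarith
  -- denominator
  set D : ℝ → ℝ := fun s => (1 - R + R * a) * Real.exp (a * T) - (1 - R) * Real.exp (a * s)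
    with hD
  have hDne : ∀ s ∈ Set.Icc (0 : ℝ) T, D s ≠ 0 := by
    intro s hs
    rcases lt_or_gt_of_ne ha0 with hlt | hgt
    · have hexp : Real.exp (a * T) ≤ Real.exp (a * s) :=
        Real.exp_le_exp.mpr (by nlinarith [hs.2])
      have : D s < 0 := by
        have h1 : (1 - R) * Real.exp (a * T) ≤ (1 - R) * Real.exp (a * s) :=
          mul_le_mul_of_nonneg_left hexp hR1'
        have h2 : R * a * Real.exp (a * T) < 0 :=
          mul_neg_of_neg_of_pos (mul_neg_of_pos_of_neg hR0 hlt) (Real.exp_pos _)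
        simp only [hD]; nlinarith
      exact ne_of_lt this
    · have hexp : Real.exp (a * s) ≤ Real.exp (a * T) :=
        Real.exp_le_exp.mpr (by nlinarith [hs.2])
      have : 0 < D s := by
        have h1 : (1 - R) * Real.exp (a * s) ≤ (1 - R) * Real.exp (a * T) :=
          mul_le_mul_of_nonneg_left hexp hR1'
        have h2 : 0 < R * a * Real.exp (a * T) :=
          mul_pos (mul_pos hR0 hgt) (Real.exp_pos _)
        simp only [hD]; nlinarith
      exact (ne_of_lt this).symm
  refine ⟨hDne, ⟨fun s => R * a * Real.exp (a * s) *
      (a * D s + (1 - R) * a * Real.exp (a * s)) / (D s) ^ 2, ?_⟩, ?_⟩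
  · intro s hs
    have hDs := hDne s hs
    have hexp : HasDerivAt (fun s => Real.exp (a * s)) (Real.exp (a * s) * a) s := by
      have := ((hasDerivAt_id s).const_mul a).exp
      simpa using this
    have hnum : HasDerivAt (fun s => R * a * Real.exp (a * s))
        (R * a * (Real.exp (a * s) * a)) s := hexp.const_mul _
    have hden : HasDerivAt D (0 - (1 - R) * (Real.exp (a * s) * a)) s := by
      exact (hasDerivAt_const s _).sub (hexp.const_mul _)
    have hdiv := hnum.div hden hDs
    constructor
    · rw [hP]
      refine HasDerivAt.congr_deriv hdiv ?_
      simp only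
      ring
    · rw [hP]
      simp only
      have hσρ : σ ^ 2 - ρ = -a := by rw [ha]; ring
      simp only [hD] at hDs ⊢
      field_simp
      rw [ha]
      ring
  · have hDT : D T ≠ 0 := hDne T ⟨le_of_lt hT, le_refl T⟩
    rw [hP]
    simp only
    rw [div_eq_one_iff_eq hDT]
    simp only [hD]
    ring
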